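/- Let 0 ≤ d ≤ n be integers, let H be a k-uniform family of subsets of [n], and let 𝔽 be a field. Suppose there is a polynomial P(x₁,…,xₙ,y₁,…,yₙ) over 𝔽 of total degree at most d such that P(v_F, v_F) ≠ 0 for each F ∈ H and P(v_F, v_G) = 0 for all distinct F, G ∈ H, where v_F ∈ {0,1}ⁿ is the characteristic vector of F. Then |H| ≤ 2 · C(n, ⌊d/2⌋). -/

import Mathlib

open Finset MvPolynomial
open Matrix

/-- Characteristic (0-1) vector of a subset of `[n]` in a field. -/
def charVec (𝔽 : Type*) [Field 𝔽] {n : ℕ} (F : Finset (Fin n)) : Fin n → 𝔽 :=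
  fun i => if i ∈ F then 1 else 0

namespace UniformCLP

/-- Monotonicity of binomial coefficients up to the middle. -/
lemma choose_le_choose_half {n a b : ℕ} (hab : a ≤ b) (hb : b ≤ n / 2) :
    n.choose a ≤ n.choose b := by
  induction b, hab using Nat.le_induction with
  | base => exact le_rfl
  | succ b hb' ih =>
    exact (ih (by omega)).trans (Nat.choose_le_succ_of_lt_half_left (by omega))

/-- Number of `t`-subsets between `S` and `G`. -/
lemma card_middle {n t : ℕ} (S G : Finset (Fin n)) (hSG : S ⊆ G) (hst : S.card ≤ t) :
    ((Finset.univ.filter fun T : Finset (Fin n) => T.card = t ∧ S ⊆ T ∧ T ⊆ G)).card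
      = (G.card - S.card).choose (t - S.card) := by
  classical
  have hpc := Finset.card_powersetCard (t - S.card) (G \ S)
  rw [Finset.card_sdiff_of_subset hSG] at hpc
  rw [← hpc]
  apply Finset.card_bij' (fun T _ => T \ S) (fun T' _ => T' ∪ S)
  · intro T hT
    rw [Finset.mem_filter] at hT
    obtain ⟨-, hcard, hST, hTG⟩ := hT
    rw [Finset.mem_powersetCard]
    exact ⟨Finset.sdiff_subset_sdiff hTG le_rfl, by rw [Finset.card_sdiff_of_subset hST, hcard]⟩
  · intro T' hT'
    rw [Finset.mem_powersetCard] at hT'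
    obtain ⟨hsub, hcard⟩ := hT'
    have hdisj : Disjoint T' S := Finset.disjoint_of_subset_left hsub Finset.sdiff_disjoint
    rw [Finset.mem_filter]
    refine ⟨Finset.mem_univ _, ?_, Finset.subset_union_right, ?_⟩
    · rw [Finset.card_union_of_disjoint hdisj, hcard]
      omega
    · exact Finset.union_subset (hsub.trans Finset.sdiff_subset) hSG
  · intro T hT
    rw [Finset.mem_filter] at hT
    exact Finset.sdiff_union_of_subset hT.2.2.1
  · intro T' hT'
    rw [Finset.mem_powersetCard] at hT'
    exact Finset.union_sdiff_cancel_right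
      (Finset.disjoint_of_subset_left hT'.1 Finset.sdiff_disjoint)

/-- The key rational identity: a column of the inclusion matrix is a fixed rational
combination of the `w T`, `T` of size `t`. -/
lemma col_identity {n t k : ℕ} (htk : t ≤ k) (G : Finset (Fin n)) (hG : G.card = k)
    (S : Finset (Fin n)) (hS : S.card ≤ t) :
    (if S ⊆ G then (1 : ℚ) else 0)
      = ∑ T : {T : Finset (Fin n) // T.card = t},
          (if T.1 ⊆ G then (1 : ℚ) else 0) *
            (if S ⊆ T.1 then (((k - S.card).choose (t - S.card) : ℚ))⁻¹ else 0) := by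
  classical
  have hcpos : 0 < (k - S.card).choose (t - S.card) :=
    Nat.choose_pos (by omega)
  rw [← Finset.sum_subtype
      ((Finset.univ : Finset (Finset (Fin n))).filter fun T => T.card = t)
      (fun T => by simp) (fun T => (if T ⊆ G then (1 : ℚ) else 0) *
        (if S ⊆ T then (((k - S.card).choose (t - S.card) : ℚ))⁻¹ else 0))]
  have hrw : ∀ T : Finset (Fin n),
      (if T ⊆ G then (1 : ℚ) else 0) *
          (if S ⊆ T then (((k - S.card).choose (t - S.card) : ℚ))⁻¹ else 0)
        = if S ⊆ T ∧ T ⊆ G then (((k - S.card).choose (t - S.card) : ℚ))⁻¹ else 0 := by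
    intro T
    split_ifs with h1 h2 h3 h4 h5 <;> simp_all
  simp_rw [hrw]
  rw [← Finset.sum_filter, Finset.filter_filter, Finset.sum_const]
  by_cases hSG : S ⊆ G
  · rw [if_pos hSG, card_middle S G hSG hS, hG, nsmul_eq_mul]
    rw [mul_inv_cancel₀]
    exact_mod_cast hcpos.ne'
  · rw [if_neg hSG]
    have : (Finset.univ.filter fun T : Finset (Fin n) => T.card = t ∧ S ⊆ T ∧ T ⊆ G) = ∅ := by
      rw [Finset.filter_eq_empty_iff]
      rintro T - ⟨-, hST, hTG⟩
      exact hSG (hST.trans hTG)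
    rw [this]
    simp

section Field

variable {𝔽 : Type*} [Field 𝔽] {n : ℕ}

/-- The cast linear map from integer vectors to vectors over a ring. -/
noncomputable def castLin (𝒮 : Type*) (R : Type*) [CommRing R] :
    (𝒮 → ℤ) →ₗ[ℤ] (𝒮 → R) where
  toFun v S := ((v S : ℤ) : R)
  map_add' x y := by funext S; simp
  map_smul' c x := by
    funext S
    simp [zsmul_eq_mul]

lemma castLin_injective (𝒮 : Type*) (R : Type*) [CommRing R] [CharZero R] :
    Function.Injective (castLin 𝒮 R) := by
  intro x y h
  funext S
  have := congrFun h S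
  simp only [castLin, LinearMap.coe_mk, AddHom.coe_mk] at this
  exact_mod_cast this

/-- Key rank bound: the inclusion matrix of subsets of size `≤ t` versus members of a
`k`-uniform family has rank at most `n.choose t`, over any field. -/
lemma rank_incl_le {t k : ℕ} (htk : t ≤ k) (H : Finset (Finset (Fin n)))
    (hunif : ∀ G ∈ H, G.card = k) :
    (Matrix.of fun (S : {S : Finset (Fin n) // S.card ≤ t}) (G : {x // x ∈ H}) =>
      (if S.1 ⊆ G.1 then (1 : 𝔽) else 0)).rank ≤ n.choose t := by
  classical
  set 𝒮 := {S : Finset (Fin n) // S.card ≤ t}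
  set ι := {x // x ∈ H}
  set colZ : ι → (𝒮 → ℤ) := fun G S => if S.1 ⊆ G.1 then 1 else 0 with hcolZ
  set L : Submodule ℤ (𝒮 → ℤ) := Submodule.span ℤ (Set.range colZ) with hL
  haveI : Module.Finite ℤ L := Module.Finite.span_of_finite ℤ (Set.finite_range colZ)
  haveI hnz : NoZeroSMulDivisors ℤ (𝒮 → ℤ) := by
    constructor
    intro c x h
    by_cases hc : c = 0
    · exact Or.inl hc
    · refine Or.inr ?_
      funext S
      have hS := congrFun h S
      simp only [Pi.smul_apply, smul_eq_mul, Pi.zero_apply] at hS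
      rcases mul_eq_zero.mp hS with h' | h'
      · exact absurd h' hc
      · exact h'
  haveI : Module.Free ℤ L := Module.free_of_finite_type_torsion_free'
  set r := Module.finrank ℤ L with hr
  set bb := Module.finBasis ℤ L with hbb
  -- Step B : r ≤ n.choose t
  have hstepB : r ≤ n.choose t := by
    set w : {T : Finset (Fin n) // T.card = t} → (𝒮 → ℚ) := fun T S =>
      if S.1 ⊆ T.1 then (((k - S.1.card).choose (t - S.1.card) : ℚ))⁻¹ else 0 with hw
    set W : Submodule ℚ (𝒮 → ℚ) := Submodule.span ℚ (Set.range w) with hW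
    set u : Fin r → (𝒮 → ℚ) := fun j => castLin 𝒮 ℚ (bb j) with hu
    -- each column over ℚ lies in W
    have hcol : ∀ G : ι, castLin 𝒮 ℚ (colZ G) ∈ W := by
      intro G
      have : castLin 𝒮 ℚ (colZ G)
          = ∑ T : {T : Finset (Fin n) // T.card = t}, (if T.1 ⊆ G.1 then (1:ℚ) else 0) • w T := by
        funext S
        have := col_identity htk G.1 (hunif G.1 G.2) S.1 S.2
        simp only [castLin, LinearMap.coe_mk, AddHom.coe_mk, hcolZ, Finset.sum_apply,
          Pi.smul_apply, smul_eq_mul]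
        rw [apply_ite (fun z : ℤ => (z : ℚ)), Int.cast_one, Int.cast_zero]
        exact this
      rw [this]
      exact Submodule.sum_mem _ fun T _ =>
        Submodule.smul_mem _ _ (Submodule.subset_span (Set.mem_range_self T))
    -- the basis vectors, cast to ℚ, lie in W
    have humem : ∀ j, u j ∈ W := by
      intro j
      have h1 : (bb j : 𝒮 → ℤ) ∈ L := (bb j).2
      have h2 : castLin 𝒮 ℚ (bb j : 𝒮 → ℤ) ∈
          Submodule.span ℤ ((castLin 𝒮 ℚ) '' (Set.range colZ)) := by
        have := Submodule.image_span_subset_span (castLin 𝒮 ℚ) (Set.range colZ)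
        exact this ⟨_, h1, rfl⟩
      have h3 : (Submodule.span ℤ ((castLin 𝒮 ℚ) '' (Set.range colZ)) : Set (𝒮 → ℚ))
          ⊆ (Submodule.span ℚ ((castLin 𝒮 ℚ) '' (Set.range colZ)) : Set (𝒮 → ℚ)) :=
        Submodule.span_subset_span ℤ ℚ _
      have h4 : Submodule.span ℚ ((castLin 𝒮 ℚ) '' (Set.range colZ)) ≤ W := by
        rw [Submodule.span_le]
        rintro _ ⟨_, ⟨G, rfl⟩, rfl⟩
        exact hcol G
      exact h4 (h3 h2)
    -- linear independence of u over ℚ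
    have hindZ : LinearIndependent ℤ u := by
      have h0 : LinearIndependent ℤ (fun j => ((bb j : L) : 𝒮 → ℤ)) :=
        bb.linearIndependent.map' L.subtype (Submodule.ker_subtype L)
      exact h0.map' (castLin 𝒮 ℚ)
        (LinearMap.ker_eq_bot.mpr (castLin_injective 𝒮 ℚ))
    have hindQ : LinearIndependent ℚ u :=
      (LinearIndependent.iff_fractionRing (R := ℤ) (K := ℚ)).mp hindZ
    -- restrict to W
    have hindW : LinearIndependent ℚ (fun j => (⟨u j, humem j⟩ : W)) := by
      apply LinearIndependent.of_comp W.subtype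
      convert hindQ
      rfl
    have hcardle : Fintype.card (Fin r) ≤ Module.finrank ℚ W :=
      hindW.fintype_card_le_finrank
    have hWle : Module.finrank ℚ W ≤ Fintype.card {T : Finset (Fin n) // T.card = t} :=
      finrank_range_le_card w
    have hcardT : Fintype.card {T : Finset (Fin n) // T.card = t} = n.choose t := by
      rw [Fintype.card_finset_len, Fintype.card_fin]
    rw [Fintype.card_fin] at hcardle
    omega
  -- Step A : rank over 𝔽 is at most r
  refine le_trans ?_ hstepB
  rw [Matrix.rank_eq_finrank_span_cols]
  have hcolF : ∀ G : ι,
      (Matrix.of fun (S : 𝒮) (G : ι) => (if S.1 ⊆ G.1 then (1 : 𝔽) else 0))ᵀ G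
        = castLin 𝒮 𝔽 (colZ G) := by
    intro G
    funext S
    simp only [Matrix.transpose_apply, Matrix.of_apply, castLin, LinearMap.coe_mk,
      AddHom.coe_mk, hcolZ]
    rw [apply_ite (fun z : ℤ => (z : 𝔽)), Int.cast_one, Int.cast_zero]
  have hsub : Set.range (Matrix.of fun (S : 𝒮) (G : ι) => (if S.1 ⊆ G.1 then (1 : 𝔽) else 0))ᵀ
      ⊆ (Submodule.span 𝔽 (Set.range (fun j => castLin 𝒮 𝔽 (bb j))) : Set (𝒮 → 𝔽)) := by
    rintro _ ⟨G, rfl⟩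
    rw [hcolF G]
    have h1 : colZ G ∈ L := Submodule.subset_span (Set.mem_range_self G)
    have h2 : castLin 𝒮 𝔽 (colZ G) ∈
        Submodule.span ℤ ((castLin 𝒮 𝔽) '' (Set.range colZ)) :=
      Submodule.image_span_subset_span (castLin 𝒮 𝔽) (Set.range colZ) ⟨_, h1, rfl⟩
    -- express via basis instead: every element of `L` maps into the span of cast basis vectors
    clear h2
    have hrepr := bb.sum_repr ⟨colZ G, h1⟩
    have : colZ G = ∑ j, (bb.repr ⟨colZ G, h1⟩ j) • ((bb j : L) : 𝒮 → ℤ) := by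
      have := congrArg (Subtype.val) hrepr
      simpa only [Submodule.coe_sum, Submodule.coe_smul] using this.symm
    rw [this, map_sum]
    apply Submodule.sum_mem
    intro j _
    rw [_root_.map_smul]
    rw [← Int.cast_smul_eq_zsmul 𝔽]
    exact Submodule.smul_mem _ _ (Submodule.subset_span (Set.mem_range_self j))
  calc Module.finrank 𝔽 (Submodule.span 𝔽
        (Set.range (Matrix.of fun (S : 𝒮) (G : ι) => (if S.1 ⊆ G.1 then (1 : 𝔽) else 0))ᵀ))
      ≤ Module.finrank 𝔽 (Submodule.span 𝔽 (Set.range (fun j => castLin 𝒮 𝔽 (bb j)))) := by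
        apply Submodule.finrank_mono
        rw [Submodule.span_le]
        exact hsub
    _ ≤ Fintype.card (Fin r) := finrank_range_le_card _
    _ = r := Fintype.card_fin r

/-- rank of a sum of matrices. -/
lemma matrix_rank_add_le {m o : Type*} [Fintype m] [Fintype o] (A B : Matrix m o 𝔽) :
    (A + B).rank ≤ A.rank + B.rank := by
  classical
  rw [Matrix.rank_eq_finrank_span_cols, Matrix.rank_eq_finrank_span_cols,
    Matrix.rank_eq_finrank_span_cols]
  have hsub : Submodule.span 𝔽 (Set.range (A + B)ᵀ) ≤
      Submodule.span 𝔽 (Set.range Aᵀ) ⊔ Submodule.span 𝔽 (Set.range Bᵀ) := by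
    rw [Submodule.span_le]
    rintro _ ⟨j, rfl⟩
    have hj : (A + B)ᵀ j = Aᵀ j + Bᵀ j := rfl
    rw [hj]
    exact Submodule.add_mem_sup (Submodule.subset_span (Set.mem_range_self j))
      (Submodule.subset_span (Set.mem_range_self j))
  refine (Submodule.finrank_mono hsub).trans ?_
  exact Submodule.finrank_add_le_finrank_add_finrank _ _

/-- x-support of a monomial. -/
def Apart {n : ℕ} (μ : (Fin n ⊕ Fin n) →₀ ℕ) : Finset (Fin n) :=
  Finset.univ.filter fun i => μ (Sum.inl i) ≠ 0

/-- y-support of a monomial. -/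
def Bpart {n : ℕ} (μ : (Fin n ⊕ Fin n) →₀ ℕ) : Finset (Fin n) :=
  Finset.univ.filter fun i => μ (Sum.inr i) ≠ 0

lemma sum_collapse {α : Type*} [DecidableEq α] {t : ℕ} (E : Finset α)
    (Bf : α → Finset (Fin n)) (hB : ∀ μ ∈ E, (Bf μ).card ≤ t) (c : α → 𝔽)
    (G : Finset (Fin n)) :
    ∑ S : {S : Finset (Fin n) // S.card ≤ t},
        (∑ μ ∈ E, if Bf μ = S.1 then c μ else 0) * (if S.1 ⊆ G then (1 : 𝔽) else 0)
      = ∑ μ ∈ E, c μ * (if Bf μ ⊆ G then (1 : 𝔽) else 0) := by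
  classical
  calc ∑ S : {S : Finset (Fin n) // S.card ≤ t},
        (∑ μ ∈ E, if Bf μ = S.1 then c μ else 0) * (if S.1 ⊆ G then (1 : 𝔽) else 0)
      = ∑ S : {S : Finset (Fin n) // S.card ≤ t},
          ∑ μ ∈ E, (if Bf μ = S.1 then c μ else 0) * (if S.1 ⊆ G then (1 : 𝔽) else 0) :=
        Finset.sum_congr rfl fun S _ => Finset.sum_mul _ _ _
    _ = ∑ μ ∈ E, ∑ S : {S : Finset (Fin n) // S.card ≤ t},
          (if Bf μ = S.1 then c μ else 0) * (if S.1 ⊆ G then (1 : 𝔽) else 0) :=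
        Finset.sum_comm
    _ = ∑ μ ∈ E, c μ * (if Bf μ ⊆ G then (1 : 𝔽) else 0) := by
        apply Finset.sum_congr rfl
        intro μ hμ
        rw [Finset.sum_eq_single (⟨Bf μ, hB μ hμ⟩ : {S : Finset (Fin n) // S.card ≤ t})]
        · rw [if_pos rfl]
        · intro S _ hS
          have hne : ¬ Bf μ = S.1 := fun h => hS (Subtype.ext h.symm)
          rw [if_neg hne, zero_mul]
        · intro h
          exact absurd (Finset.mem_univ _) h

lemma sum_collapse' {α : Type*} [DecidableEq α] {t : ℕ} (E : Finset α)
    (Af : α → Finset (Fin n)) (hA : ∀ μ ∈ E, (Af μ).card ≤ t) (c : α → 𝔽)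
    (F : Finset (Fin n)) :
    ∑ S : {S : Finset (Fin n) // S.card ≤ t},
        (if S.1 ⊆ F then (1 : 𝔽) else 0) * (∑ μ ∈ E, if Af μ = S.1 then c μ else 0)
      = ∑ μ ∈ E, (if Af μ ⊆ F then (1 : 𝔽) else 0) * c μ := by
  classical
  calc ∑ S : {S : Finset (Fin n) // S.card ≤ t},
        (if S.1 ⊆ F then (1 : 𝔽) else 0) * (∑ μ ∈ E, if Af μ = S.1 then c μ else 0)
      = ∑ S : {S : Finset (Fin n) // S.card ≤ t},
          ∑ μ ∈ E, (if S.1 ⊆ F then (1 : 𝔽) else 0) * (if Af μ = S.1 then c μ else 0) :=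
        Finset.sum_congr rfl fun S _ => Finset.mul_sum _ _ _
    _ = ∑ μ ∈ E, ∑ S : {S : Finset (Fin n) // S.card ≤ t},
          (if S.1 ⊆ F then (1 : 𝔽) else 0) * (if Af μ = S.1 then c μ else 0) :=
        Finset.sum_comm
    _ = ∑ μ ∈ E, (if Af μ ⊆ F then (1 : 𝔽) else 0) * c μ := by
        apply Finset.sum_congr rfl
        intro μ hμ
        rw [Finset.sum_eq_single (⟨Af μ, hA μ hμ⟩ : {S : Finset (Fin n) // S.card ≤ t})]
        · rw [if_pos rfl]
        · intro S _ hS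
          have hne : ¬ Af μ = S.1 := fun h => hS (Subtype.ext h.symm)
          rw [if_neg hne, mul_zero]
        · intro h
          exact absurd (Finset.mem_univ _) h

lemma prod_charVec (F : Finset (Fin n)) (e : Fin n → ℕ) :
    ∏ i, (charVec 𝔽 F i) ^ (e i)
      = if (Finset.univ.filter fun i => e i ≠ 0) ⊆ F then 1 else 0 := by
  classical
  by_cases h : (Finset.univ.filter fun i => e i ≠ 0) ⊆ F
  · rw [if_pos h]
    apply Finset.prod_eq_one
    intro i _
    by_cases he : e i = 0
    · simp [he]
    · have hiF : i ∈ F := h (Finset.mem_filter.mpr ⟨Finset.mem_univ _, he⟩)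
      simp [charVec, hiF]
  · rw [if_neg h]
    obtain ⟨i, hi, hiF⟩ := Finset.not_subset.mp h
    have he : e i ≠ 0 := (Finset.mem_filter.mp hi).2
    apply Finset.prod_eq_zero (Finset.mem_univ i)
    have : charVec 𝔽 F i = 0 := by simp [charVec, hiF]
    rw [this, zero_pow he]

lemma eval_expand (F G : Finset (Fin n)) (P : MvPolynomial (Fin n ⊕ Fin n) 𝔽) :
    eval (Sum.elim (charVec 𝔽 F) (charVec 𝔽 G)) P
      = ∑ μ ∈ P.support, coeff μ P *
          ((if Apart μ ⊆ F then (1 : 𝔽) else 0) * (if Bpart μ ⊆ G then (1 : 𝔽) else 0)) := by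
  classical
  rw [eval_eq']
  apply Finset.sum_congr rfl
  intro μ _
  congr 1
  rw [Fintype.prod_sum_type]
  congr 1
  · exact prod_charVec F (fun i => μ (Sum.inl i))
  · exact prod_charVec G (fun i => μ (Sum.inr i))

lemma card_parts_le {d : ℕ} {P : MvPolynomial (Fin n ⊕ Fin n) 𝔽} (hdeg : P.totalDegree ≤ d)
    {μ : (Fin n ⊕ Fin n) →₀ ℕ} (hμ : μ ∈ P.support) :
    (Apart μ).card + (Bpart μ).card ≤ d := by
  classical
  have h1 : (Apart μ).card ≤ ∑ i, μ (Sum.inl i) := by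
    rw [Finset.card_eq_sum_ones]
    calc ∑ _i ∈ Apart μ, 1 ≤ ∑ i ∈ Apart μ, μ (Sum.inl i) := by
          apply Finset.sum_le_sum
          intro i hi
          have := (Finset.mem_filter.mp hi).2
          omega
      _ ≤ ∑ i, μ (Sum.inl i) :=
          Finset.sum_le_sum_of_subset (Finset.subset_univ _)
  have h2 : (Bpart μ).card ≤ ∑ i, μ (Sum.inr i) := by
    rw [Finset.card_eq_sum_ones]
    calc ∑ _i ∈ Bpart μ, 1 ≤ ∑ i ∈ Bpart μ, μ (Sum.inr i) := by
          apply Finset.sum_le_sum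
          intro i hi
          have := (Finset.mem_filter.mp hi).2
          omega
      _ ≤ ∑ i, μ (Sum.inr i) :=
          Finset.sum_le_sum_of_subset (Finset.subset_univ _)
  have h3 : ∑ i, μ (Sum.inl i) + ∑ i, μ (Sum.inr i) = ∑ v : Fin n ⊕ Fin n, μ v :=
    (Fintype.sum_sum_type _).symm
  have h4 : ∑ v : Fin n ⊕ Fin n, μ v = μ.sum fun _ e => e :=
    (Finsupp.sum_fintype μ (fun _ e => e) (fun _ => rfl)).symm
  have h5 : (μ.sum fun _ e => e) ≤ P.totalDegree := le_totalDegree hμ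
  omega

end Field

end UniformCLP

open UniformCLP in
theorem uniform_CLP {n d k : ℕ} (hdn : d ≤ n) (𝔽 : Type*) [Field 𝔽]
    (H : Finset (Finset (Fin n))) (hunif : ∀ F ∈ H, F.card = k)
    (P : MvPolynomial (Fin n ⊕ Fin n) 𝔽) (hdeg : P.totalDegree ≤ d)
    (hdiag : ∀ F ∈ H, eval (Sum.elim (charVec 𝔽 F) (charVec 𝔽 F)) P ≠ 0)
    (hoff : ∀ F ∈ H, ∀ G ∈ H, F ≠ G →
      eval (Sum.elim (charVec 𝔽 F) (charVec 𝔽 G)) P = 0) :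
    H.card ≤ 2 * n.choose (d / 2) := by
  classical
  set t := d / 2 with ht
  rcases le_or_gt k t with hkt | htk
  · -- trivial case : k ≤ t
    have h1 : H.card ≤ n.choose k := by
      have hsub : H ⊆ (Finset.univ : Finset (Fin n)).powersetCard k := by
        intro F hF
        exact Finset.mem_powersetCard.mpr ⟨Finset.subset_univ _, hunif F hF⟩
      calc H.card ≤ _ := Finset.card_le_card hsub
        _ = n.choose k := by
            rw [Finset.card_powersetCard, Finset.card_univ, Fintype.card_fin]
    have h2 : n.choose k ≤ n.choose t :=
      choose_le_choose_half hkt (by omega)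
    omega
  · -- main case : t < k
    set ι := {x // x ∈ H}
    set 𝒮 := {S : Finset (Fin n) // S.card ≤ t}
    set Mm : Matrix ι ι 𝔽 :=
      Matrix.of fun F G => eval (Sum.elim (charVec 𝔽 F.1) (charVec 𝔽 G.1)) P with hMm
    set N : Matrix 𝒮 ι 𝔽 :=
      Matrix.of fun S G => (if S.1 ⊆ G.1 then (1 : 𝔽) else 0) with hN
    set S1 : Finset ((Fin n ⊕ Fin n) →₀ ℕ) :=
      P.support.filter fun μ => (Bpart μ).card ≤ t with hS1
    set S2 : Finset ((Fin n ⊕ Fin n) →₀ ℕ) :=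
      P.support.filter fun μ => ¬ ((Bpart μ).card ≤ t) with hS2
    set C1 : Matrix ι 𝒮 𝔽 := Matrix.of fun F S =>
      ∑ μ ∈ S1, if Bpart μ = S.1 then coeff μ P * (if Apart μ ⊆ F.1 then (1:𝔽) else 0) else 0
      with hC1
    set C2 : Matrix 𝒮 ι 𝔽 := Matrix.of fun S G =>
      ∑ μ ∈ S2, if Apart μ = S.1 then coeff μ P * (if Bpart μ ⊆ G.1 then (1:𝔽) else 0) else 0
      with hC2
    -- the matrix is diagonal with nonzero entries
    have hdiagM : Mm = Matrix.diagonal (fun F => Mm F F) := by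
      ext F G
      by_cases h : F = G
      · subst h; simp [Matrix.diagonal]
      · rw [Matrix.diagonal_apply_ne _ h]
        exact hoff F.1 F.2 G.1 G.2 (fun e => h (Subtype.ext e))
    have hcard : H.card = Mm.rank := by
      rw [hdiagM, Matrix.rank_diagonal]
      rw [← Fintype.card_coe H]
      symm
      apply Fintype.card_congr
      exact Equiv.subtypeUnivEquiv fun F => hdiag F.1 F.2
    have hB1 : ∀ μ ∈ S1, (Bpart μ).card ≤ t := by
      intro μ hμ
      rw [hS1, Finset.mem_filter] at hμ
      exact hμ.2
    have hA2 : ∀ μ ∈ S2, (Apart μ).card ≤ t := by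
      intro μ hμ
      rw [hS2, Finset.mem_filter] at hμ
      have := card_parts_le (𝔽 := 𝔽) hdeg hμ.1
      have h2 := hμ.2
      omega
    -- decomposition
    have hsplit : Mm = C1 * N + Nᵀ * C2 := by
      ext F G
      have lhs : Mm F G = eval (Sum.elim (charVec 𝔽 F.1) (charVec 𝔽 G.1)) P := rfl
      rw [lhs, UniformCLP.eval_expand,
        ← Finset.sum_filter_add_sum_filter_not P.support fun μ => (Bpart μ).card ≤ t,
        ← hS1, ← hS2, Matrix.add_apply, Matrix.mul_apply, Matrix.mul_apply]
      congr 1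
      · symm
        simp only [hC1, hN, Matrix.of_apply]
        rw [sum_collapse S1 Bpart hB1
          (fun μ => coeff μ P * (if Apart μ ⊆ F.1 then (1:𝔽) else 0)) G.1]
        exact Finset.sum_congr rfl fun μ _ => by ring
      · symm
        simp only [hC2, hN, Matrix.transpose_apply, Matrix.of_apply]
        rw [sum_collapse' S2 Apart hA2
          (fun μ => coeff μ P * (if Bpart μ ⊆ G.1 then (1:𝔽) else 0)) F.1]
        exact Finset.sum_congr rfl fun μ _ => by ring
    -- rank bounds
    have hrkN : N.rank ≤ n.choose t := by
      rw [hN]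
      exact rank_incl_le (le_of_lt htk) H hunif
    have h1 : (C1 * N).rank ≤ n.choose t := (Matrix.rank_mul_le_right _ _).trans hrkN
    have h2 : (Nᵀ * C2).rank ≤ n.choose t := by
      refine (Matrix.rank_mul_le_left _ _).trans ?_
      rw [Matrix.rank_transpose]
      exact hrkN
    have h3 := matrix_rank_add_le (C1 * N) (Nᵀ * C2)
    rw [hsplit] at hcard
    omega
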